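/- The language L₂' = { w x y : |w| = |x|, 2|w| = |y|, w a nonempty string over {1,2}, x a string over {3,6}, y a string over {5,10,15,30} } over the alphabet {1,2,3,6,5,10,15,30} is CFL-immune; that is, L₂' is infinite and no infinite subset of L₂' is a context-free language. -/

import Mathlib

namespace CFLPump

open ContextFreeGrammar

universe uN
variable {T : Type}

/-- Step-counted derivations. -/
inductive DerivesIn (g : ContextFreeGrammar T) :
    List (Symbol T g.NT) → List (Symbol T g.NT) → ℕ → Prop
  | refl (u : List (Symbol T g.NT)) : DerivesIn g u u 0
  | head {u v w : List (Symbol T g.NT)} {n : ℕ} :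
      g.Produces u v → DerivesIn g v w n → DerivesIn g u w (n + 1)

variable {g : ContextFreeGrammar T}

lemma DerivesIn.cast {u v : List (Symbol T g.NT)} {n m : ℕ} (h : DerivesIn g u v n)
    (hnm : n = m) : DerivesIn g u v m := hnm ▸ h

lemma DerivesIn.toDerives {u v : List (Symbol T g.NT)} {n : ℕ} (h : DerivesIn g u v n) :
    g.Derives u v := by
  induction h with
  | refl u => exact ContextFreeGrammar.Derives.refl u
  | head hp _ ih => exact hp.trans_derives ih

lemma DerivesIn.tail {u v w : List (Symbol T g.NT)} {n : ℕ} (h : DerivesIn g u v n)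
    (hp : g.Produces v w) : DerivesIn g u w (n + 1) := by
  induction h with
  | refl u => exact .head hp (.refl _)
  | head hp' _ ih => exact .head hp' (ih hp)

lemma exists_derivesIn {u v : List (Symbol T g.NT)} (h : g.Derives u v) :
    ∃ n, DerivesIn g u v n := by
  induction h with
  | refl => exact ⟨0, .refl _⟩
  | tail _ hp ih => obtain ⟨n, hn⟩ := ih; exact ⟨n + 1, hn.tail hp⟩

lemma DerivesIn.trans {u v w : List (Symbol T g.NT)} {n m : ℕ}
    (h1 : DerivesIn g u v n) (h2 : DerivesIn g v w m) : DerivesIn g u w (n + m) := by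
  induction h1 with
  | refl => simpa using h2
  | head hp _ ih => exact (DerivesIn.head hp (ih h2)).cast (by omega)

lemma DerivesIn.append_left {v w : List (Symbol T g.NT)} {n : ℕ}
    (h : DerivesIn g v w n) (p : List (Symbol T g.NT)) : DerivesIn g (p ++ v) (p ++ w) n := by
  induction h with
  | refl u => exact .refl _
  | head hp _ ih => exact .head (hp.append_left p) ih

lemma DerivesIn.append_right {v w : List (Symbol T g.NT)} {n : ℕ}
    (h : DerivesIn g v w n) (p : List (Symbol T g.NT)) : DerivesIn g (v ++ p) (w ++ p) n := by
  induction h with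
  | refl u => exact .refl _
  | head hp _ ih => exact .head (hp.append_right p) ih

lemma DerivesIn.append_append {p q a b : List (Symbol T g.NT)} {n m : ℕ}
    (h1 : DerivesIn g p a n) (h2 : DerivesIn g q b m) :
    DerivesIn g (p ++ q) (a ++ b) (n + m) :=
  (h1.append_right q).trans (h2.append_left a)

/-- Rewriting a concatenation happens in one part. -/
lemma rewrites_append_split {N : Type uN} {r : ContextFreeRule T N} :
    ∀ {p q v : List (Symbol T N)}, r.Rewrites (p ++ q) v →
      (∃ p', r.Rewrites p p' ∧ v = p' ++ q) ∨ (∃ q', r.Rewrites q q' ∧ v = p ++ q') := by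
  intro p
  induction p with
  | nil => exact fun h => Or.inr ⟨_, h, rfl⟩
  | cons a p ih =>
    intro q v h
    cases h with
    | head s => exact Or.inl ⟨r.output ++ p, ContextFreeRule.Rewrites.head p, by simp⟩
    | cons x h' =>
      rcases ih h' with ⟨p', hp, rfl⟩ | ⟨q', hq, rfl⟩
      · exact Or.inl ⟨a :: p', hp.cons a, by simp⟩
      · exact Or.inr ⟨q', hq, by simp⟩





lemma rewrites_map_terminal {N : Type uN} {r : ContextFreeRule T N} :
    ∀ {w : List T} {v : List (Symbol T N)}, ¬ r.Rewrites (w.map Symbol.terminal) v := by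
  intro w
  induction w with
  | nil => intro v hv; cases hv
  | cons a w ih =>
    intro v hv
    cases hv with
    | cons x h' => exact ih h'

lemma derivesIn_map_terminal {w : List T} {v : List (Symbol T g.NT)} {n : ℕ}
    (h : DerivesIn g (w.map Symbol.terminal) v n) : v = w.map Symbol.terminal ∧ n = 0 := by
  cases h with
  | refl => exact ⟨rfl, rfl⟩
  | head hp _ =>
    obtain ⟨r, _, hrw⟩ := hp
    exact absurd hrw rewrites_map_terminal

lemma derivesIn_nil {v : List (Symbol T g.NT)} {n : ℕ}
    (h : DerivesIn g [] v n) : v = [] ∧ n = 0 := by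
  have := @derivesIn_map_terminal T g [] v n (by simpa using h)
  simpa using this

lemma rewrites_single_nt {N : Type uN} {r : ContextFreeRule T N} {A : N} {v : List (Symbol T N)}
    (h : r.Rewrites [Symbol.nonterminal A] v) : r.input = A ∧ v = r.output := by
  cases h with
  | head s =>
    exact ⟨rfl, by simp⟩
  | cons x h' => cases h'

/-- Splitting a step-counted derivation of a concatenation. -/
lemma DerivesIn.append_split {p q w : List (Symbol T g.NT)} {n : ℕ}
    (h : DerivesIn g (p ++ q) w n) :
    ∃ a b n1 n2, w = a ++ b ∧ n1 + n2 = n ∧ DerivesIn g p a n1 ∧ DerivesIn g q b n2 := by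
  induction n generalizing p q w with
  | zero =>
    cases h with
    | refl => exact ⟨p, q, 0, 0, rfl, rfl, .refl _, .refl _⟩
  | succ n ih =>
    cases h with
    | head hp hd =>
      obtain ⟨r, hr, hrw⟩ := hp
      rcases rewrites_append_split hrw with ⟨p', hp', rfl⟩ | ⟨q', hq', rfl⟩
      · obtain ⟨a, b, n1, n2, rfl, hn, h1, h2⟩ := ih hd
        exact ⟨a, b, n1 + 1, n2, rfl, by omega, .head ⟨r, hr, hp'⟩ h1, h2⟩
      · obtain ⟨a, b, n1, n2, rfl, hn, h1, h2⟩ := ih hd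
        exact ⟨a, b, n1, n2 + 1, rfl, by omega, h1, .head ⟨r, hr, hq'⟩ h2⟩

/-- In a derivation of a terminal word from a sentential form, some symbol accounts for
at least its fair share of the word. -/
lemma find_big :
    ∀ (s : List (Symbol T g.NT)) {w : List T} {n : ℕ},
      DerivesIn g s (w.map Symbol.terminal) n → s ≠ [] →
      ∃ (s1 s2 : List (Symbol T g.NT)) (sym : Symbol T g.NT) (u w' y : List T) (n1 n' n2 : ℕ),
        s = s1 ++ [sym] ++ s2 ∧ w = u ++ w' ++ y ∧
        DerivesIn g s1 (u.map Symbol.terminal) n1 ∧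
        DerivesIn g [sym] (w'.map Symbol.terminal) n' ∧
        DerivesIn g s2 (y.map Symbol.terminal) n2 ∧
        n1 + n' + n2 = n ∧ w.length ≤ s.length * max 1 w'.length := by
  intro s
  induction s with
  | nil => intro w n _ hne; exact absurd rfl hne
  | cons a s ih =>
    intro w n h _
    rcases eq_or_ne s [] with rfl | hsne
    · refine ⟨[], [], a, [], w, [], 0, n, 0, by simp, by simp, .refl _, by simpa using h,
        .refl _, by omega, ?_⟩
      simpa using Nat.le_max_right 1 w.length
    · obtain ⟨wa', ws', na, ns, hw, hn, ha', hs'⟩ :=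
        DerivesIn.append_split (p := [a]) (q := s) h
      obtain ⟨wa, ws, rfl, rfl, rfl⟩ := List.map_eq_append_iff.mp hw
      obtain ⟨s1, s2, sym, u, w', y, n1, n', n2, hseq, rfl, h1, hsym, h2, hcnt, hbound⟩ :=
        ih hs' hsne
      rcases le_or_gt wa.length (max 1 w'.length) with hle | hlt
      · refine ⟨a :: s1, s2, sym, wa ++ u, w', y, na + n1, n', n2, by rw [hseq]; rfl,
          by simp, ?_, hsym, h2, by omega, ?_⟩
        · have := (ha'.append_append h1).cast rfl
          simpa using this
        · calc (wa ++ (u ++ w' ++ y)).length = wa.length + (u ++ w' ++ y).length := by simp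
            _ ≤ max 1 w'.length + s.length * max 1 w'.length := Nat.add_le_add hle hbound
            _ = (a :: s).length * max 1 w'.length := by rw [List.length_cons]; ring
      · have hmax : max 1 wa.length = wa.length := by omega
        refine ⟨[], s, a, [], wa, u ++ w' ++ y, 0, na, ns, by simp, by simp, .refl _, ha', hs',
          by omega, ?_⟩
        have h2' : s.length * max 1 w'.length ≤ s.length * wa.length :=
          Nat.mul_le_mul_left _ (le_of_lt hlt)
        calc (wa ++ (u ++ w' ++ y)).length = wa.length + (u ++ w' ++ y).length := by simp
          _ ≤ wa.length + s.length * wa.length := Nat.add_le_add le_rfl (hbound.trans h2')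
          _ = (a :: s).length * max 1 wa.length := by rw [List.length_cons, hmax]; ring


/-- Max output length of rules (at least 1). -/
def mOf (g : ContextFreeGrammar T) : ℕ := max 1 (g.rules.sup fun r => r.output.length)

lemma one_le_mOf : 1 ≤ mOf g := le_max_left _ _

lemma output_le_mOf {r : ContextFreeRule T g.NT} (hr : r ∈ g.rules) :
    r.output.length ≤ mOf g :=
  le_trans (Finset.le_sup (f := fun r => r.output.length) hr) (le_max_right _ _)

open Classical in
/-- The (finite) set of nonterminals appearing as inputs of rules. -/
noncomputable def inputsOf (g : ContextFreeGrammar T) : Finset g.NT :=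
  g.rules.image fun r => r.input

open Classical in
lemma mem_inputsOf {r : ContextFreeRule T g.NT} (hr : r ∈ g.rules) : r.input ∈ inputsOf g :=
  Finset.mem_image_of_mem _ hr

lemma DerivesIn.head_of_ne {u v : List (Symbol T g.NT)} {n : ℕ} (h : DerivesIn g u v n)
    (hne : u ≠ v) : ∃ v' m, g.Produces u v' ∧ DerivesIn g v' v m ∧ n = m + 1 := by
  cases h with
  | refl => exact absurd rfl hne
  | head hp hd => exact ⟨_, _, hp, hd, rfl⟩

/-- One expansion step towards a big part of the derived word. -/
lemma step_lemma {B : g.NT} {w : List T} {n : ℕ}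
    (h : DerivesIn g [Symbol.nonterminal B] (w.map Symbol.terminal) n)
    (hw : mOf g < w.length) :
    ∃ (C : g.NT) (u y w' : List T) (n' : ℕ), w = u ++ w' ++ y ∧
      w.length ≤ mOf g * w'.length ∧ n' < n ∧
      DerivesIn g [Symbol.nonterminal B]
        ((u.map Symbol.terminal) ++ [Symbol.nonterminal C] ++ (y.map Symbol.terminal)) (n - n') ∧
      DerivesIn g [Symbol.nonterminal C] (w'.map Symbol.terminal) n' ∧
      B ∈ inputsOf g := by
  have hne : [Symbol.nonterminal B] ≠ w.map (Symbol.terminal (N := g.NT)) := by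
    intro he
    have : Symbol.nonterminal B ∈ w.map (Symbol.terminal (N := g.NT)) := by
      rw [← he]; simp
    simp only [List.mem_map] at this
    obtain ⟨t, _, ht⟩ := this
    cases ht
  obtain ⟨v', n₀, hp, hd, rfl⟩ := h.head_of_ne hne
  obtain ⟨r, hr, hrw⟩ := hp
  obtain ⟨hrin, rfl⟩ := rewrites_single_nt hrw
  have houtne : r.output ≠ [] := by
    rintro hout
    rw [hout] at hd
    obtain ⟨hweq, -⟩ := derivesIn_nil hd
    rw [List.map_eq_nil_iff.mp hweq] at hw
    simp at hw
  obtain ⟨s1, s2, sym, u, w', y, n1, n', n2, hseq, hwsplit, h1, hsym, h2, hcnt, hbound⟩ :=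
    find_big r.output hd houtne
  have hsm : r.output.length ≤ mOf g := output_le_mOf hr
  have hw2 : 2 ≤ w'.length := by
    by_contra hlt
    have hm1 : max 1 w'.length = 1 := by omega
    rw [hm1, mul_one] at hbound
    omega
  have hmax : max 1 w'.length = w'.length := by omega
  rw [hmax] at hbound
  obtain ⟨C, rfl⟩ : ∃ C, sym = Symbol.nonterminal C := by
    cases sym with
    | nonterminal C => exact ⟨C, rfl⟩
    | terminal t =>
      exfalso
      have hterm := derivesIn_map_terminal (g := g) (w := [t]) (by simpa using hsym)
      have : w'.length = 1 := by
        have := congrArg List.length hterm.1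
        simpa using this
      omega
  have hstep : g.Produces [Symbol.nonterminal B] (s1 ++ [Symbol.nonterminal C] ++ s2) := by
    refine ⟨r, hr, ?_⟩
    rw [← hseq, ← hrin]
    exact ContextFreeRule.Rewrites.input_output
  have hctxder : DerivesIn g [Symbol.nonterminal B]
      ((u.map Symbol.terminal) ++ [Symbol.nonterminal C] ++ (y.map Symbol.terminal))
      (n₀ + 1 - n') := by
    have hmidder := h1.append_append ((DerivesIn.refl [Symbol.nonterminal C]).append_append h2)
    have hmidder' : DerivesIn g (s1 ++ [Symbol.nonterminal C] ++ s2)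
        ((u.map Symbol.terminal) ++ [Symbol.nonterminal C] ++ (y.map Symbol.terminal))
        (n1 + (0 + n2)) := by
      simpa [List.append_assoc] using hmidder
    exact (DerivesIn.head hstep hmidder').cast (by omega)
  exact ⟨C, u, y, w', n', hwsplit, le_trans hbound (Nat.mul_le_mul_right _ hsm),
    by omega, hctxder, hsym, hrin ▸ mem_inputsOf hr⟩

lemma DerivesIn.surround {m m' : List (Symbol T g.NT)} {n : ℕ} (h : DerivesIn g m m' n)
    (p q : List (Symbol T g.NT)) : DerivesIn g (p ++ m ++ q) (p ++ m' ++ q) n :=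
  (h.append_left p).append_right q

/-- Main induction: in a minimal derivation of a long word we find a genuine pump. -/
lemma main_lemma {w₀ : List T} {n₀ : ℕ}
    (hmin : ∀ m < n₀, ¬ DerivesIn g [Symbol.nonterminal g.initial] (w₀.map Symbol.terminal) m) :
    ∀ (t : ℕ) (V : Finset g.NT) (B : g.NT) (u y w : List T) (n a : ℕ),
      V ⊆ inputsOf g →
      (inputsOf g).card + 1 ≤ V.card + t →
      DerivesIn g [Symbol.nonterminal g.initial]
        ((u.map Symbol.terminal) ++ [Symbol.nonterminal B] ++ (y.map Symbol.terminal)) a →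
      DerivesIn g [Symbol.nonterminal B] (w.map Symbol.terminal) n →
      a + n = n₀ → w₀ = u ++ w ++ y →
      (∀ D ∈ V, ∃ u' y' v x a' b', a' + b' + n = n₀ ∧ 1 ≤ b' ∧
        DerivesIn g [Symbol.nonterminal g.initial]
          ((u'.map Symbol.terminal) ++ [Symbol.nonterminal D] ++ (y'.map Symbol.terminal)) a' ∧
        DerivesIn g [Symbol.nonterminal D]
          ((v.map Symbol.terminal) ++ [Symbol.nonterminal B] ++ (x.map Symbol.terminal)) b' ∧
        u = u' ++ v ∧ y = x ++ y') →
      mOf g ^ t < w.length →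
      ∃ (B' : g.NT) (p v z x q : List T), w₀ = p ++ v ++ z ++ x ++ q ∧ v ++ x ≠ [] ∧
        g.Derives [Symbol.nonterminal g.initial]
          ((p.map Symbol.terminal) ++ [Symbol.nonterminal B'] ++ (q.map Symbol.terminal)) ∧
        g.Derives [Symbol.nonterminal B']
          ((v.map Symbol.terminal) ++ [Symbol.nonterminal B'] ++ (x.map Symbol.terminal)) ∧
        g.Derives [Symbol.nonterminal B'] (z.map Symbol.terminal) := by
  classical
  intro t
  induction t with
  | zero =>
    intro V B u y w n a hVsub hcard _ _ _ _ _ _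
    exact absurd (Finset.card_le_card hVsub) (by omega)
  | succ t ih =>
    intro V B u y w n a hVsub hcard hctx hder hsum hw0 hinv hlen
    by_cases hBV : B ∈ V
    · obtain ⟨u', y', v, x, a', b', hab, hb1, hA', hD', hu, hy⟩ := hinv B hBV
      by_cases hvx : v ++ x = []
      · exfalso
        obtain ⟨rfl, rfl⟩ := List.append_eq_nil_iff.mp hvx
        simp only [List.append_nil, List.nil_append] at hu hy
        subst hu hy
        have hshort : DerivesIn g [Symbol.nonterminal g.initial]
            (w₀.map Symbol.terminal) (a' + n) := by
          have hmid := hder.surround (u.map Symbol.terminal) (y.map Symbol.terminal)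
          have := hA'.trans hmid
          rw [hw0]
          simpa [List.map_append, List.append_assoc] using this
        exact hmin (a' + n) (by omega) hshort
      · exact ⟨B, u', v, w, x, y', by rw [hw0, hu, hy]; simp [List.append_assoc],
          hvx, hA'.toDerives, hD'.toDerives, hder.toDerives⟩
    · have hmle : mOf g ≤ mOf g ^ (t + 1) := by
        calc mOf g = mOf g ^ 1 := (pow_one _).symm
          _ ≤ mOf g ^ (t + 1) := Nat.pow_le_pow_right one_le_mOf (by omega)
      obtain ⟨C, u', y', w'', n'', hwsplit, hbig, hn'', hctxB, hderC, hBin⟩ :=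
        step_lemma hder (lt_of_le_of_lt hmle hlen)
      have hlen' : mOf g ^ t < w''.length := by
        have h1 : mOf g * mOf g ^ t < mOf g * w''.length := by
          calc mOf g * mOf g ^ t = mOf g ^ (t + 1) := by ring
            _ < w.length := hlen
            _ ≤ mOf g * w''.length := hbig
        exact Nat.lt_of_mul_lt_mul_left h1
      have hctx2 : DerivesIn g [Symbol.nonterminal g.initial]
          (((u ++ u').map Symbol.terminal) ++ [Symbol.nonterminal C]
            ++ ((y' ++ y).map Symbol.terminal)) (a + (n - n'')) := by
        have := hctx.trans (hctxB.surround (u.map Symbol.terminal) (y.map Symbol.terminal))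
        simpa [List.map_append, List.append_assoc] using this
      refine ih (insert B V) C (u ++ u') (y' ++ y) w'' n'' (a + (n - n''))
        (Finset.insert_subset hBin hVsub) ?_ hctx2 hderC (by omega) ?_ ?_ hlen'
      · rw [Finset.card_insert_of_notMem hBV]; omega
      · rw [hw0, hwsplit]; simp [List.append_assoc]
      · intro D hD
        rcases Finset.mem_insert.mp hD with rfl | hDV
        · exact ⟨u, y, u', y', a, n - n'', by omega, by omega, hctx, hctxB, rfl, rfl⟩
        · obtain ⟨u₁, y₁, v, x, a', b', hab, hb1, hA', hD', hu, hy⟩ := hinv D hDV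
          refine ⟨u₁, y₁, v ++ u', y' ++ x, a', b' + (n - n''), by omega, by omega, hA', ?_, ?_, ?_⟩
          · have := hD'.trans (hctxB.surround (v.map Symbol.terminal) (x.map Symbol.terminal))
            simpa [List.map_append, List.append_assoc] using this
          · rw [hu]; simp [List.append_assoc]
          · rw [hy]; simp [List.append_assoc]

lemma append_flatten_replicate_comm {α : Type} (l : List α) (i : ℕ) :
    l ++ (List.replicate i l).flatten = (List.replicate i l).flatten ++ l := by
  induction i with
  | zero => simp
  | succ i ih =>
    rw [List.replicate_succ, List.flatten_cons, ih]
    rw [← List.append_assoc, ih]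

lemma flatten_replicate_succ {α : Type} (l : List α) (i : ℕ) :
    (List.replicate (i + 1) l).flatten = (List.replicate i l).flatten ++ l := by
  rw [List.replicate_succ, List.flatten_cons, append_flatten_replicate_comm]

/-- Weak pumping property for context-free grammars. -/
theorem cfg_pump (g : ContextFreeGrammar T) {w : List T} (hw : w ∈ g.language)
    (hlen : mOf g ^ ((inputsOf g).card + 1) < w.length) :
    ∃ u v z x y : List T, w = u ++ v ++ z ++ x ++ y ∧ v ++ x ≠ [] ∧
      ∀ i : ℕ, u ++ (List.replicate i v).flatten ++ z ++ (List.replicate i x).flatten ++ y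
        ∈ g.language := by
  classical
  rw [mem_language_iff] at hw
  have hex : ∃ m, DerivesIn g [Symbol.nonterminal g.initial] (w.map Symbol.terminal) m :=
    exists_derivesIn hw
  have hmin : ∀ m < Nat.find hex,
      ¬ DerivesIn g [Symbol.nonterminal g.initial] (w.map Symbol.terminal) m :=
    fun m hm => Nat.find_min hex hm
  obtain ⟨B', p, v, z, x, q, hsplit, hvx, hS, hloop, hz⟩ :=
    main_lemma hmin ((inputsOf g).card + 1) ∅ g.initial [] [] w (Nat.find hex) 0
      (Finset.empty_subset _) (by simp)
      (by simpa using DerivesIn.refl [Symbol.nonterminal g.initial])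
      (Nat.find_spec hex) (by omega) (by simp)
      (fun D hD => absurd hD (Finset.notMem_empty D)) hlen
  refine ⟨p, v, z, x, q, hsplit, hvx, fun i => ?_⟩
  rw [mem_language_iff]
  have hmid : ∀ j : ℕ, g.Derives [Symbol.nonterminal B']
      (((List.replicate j v).flatten.map Symbol.terminal) ++ [Symbol.nonterminal B']
        ++ ((List.replicate j x).flatten.map Symbol.terminal)) := by
    intro j
    induction j with
    | zero => simpa using ContextFreeGrammar.Derives.refl [Symbol.nonterminal B']
    | succ j ih =>
      have hstep := hloop.trans
        ((ih.append_left (v.map Symbol.terminal)).append_right (x.map Symbol.terminal))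
      rw [show (List.replicate (j + 1) v).flatten = v ++ (List.replicate j v).flatten from by
          rw [List.replicate_succ, List.flatten_cons],
        flatten_replicate_succ]
      simpa [List.map_append, List.append_assoc] using hstep
  have s2 : g.Derives
      ((p.map Symbol.terminal) ++ [Symbol.nonterminal B'] ++ (q.map Symbol.terminal))
      ((p.map Symbol.terminal) ++
        (((List.replicate i v).flatten.map Symbol.terminal) ++ [Symbol.nonterminal B']
          ++ ((List.replicate i x).flatten.map Symbol.terminal)) ++ (q.map Symbol.terminal)) :=
    ((hmid i).append_left _).append_right _
  have s3 : g.Derives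
      ((p.map Symbol.terminal) ++
        (((List.replicate i v).flatten.map Symbol.terminal) ++ [Symbol.nonterminal B']
          ++ ((List.replicate i x).flatten.map Symbol.terminal)) ++ (q.map Symbol.terminal))
      ((p.map Symbol.terminal) ++
        (((List.replicate i v).flatten.map Symbol.terminal) ++ (z.map Symbol.terminal)
          ++ ((List.replicate i x).flatten.map Symbol.terminal)) ++ (q.map Symbol.terminal)) :=
    ((((hz.append_left _).append_right _).append_left _).append_right _)
  have hfin := (hS.trans s2).trans s3
  simpa [List.map_append, List.append_assoc] using hfin

end CFLPump

/-- `L` is CFL-immune: `L` is infinite and no infinite subset of `L` is context-free. -/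
def CFLImmune {T : Type} (L : Language T) : Prop :=
  Set.Infinite (L : Set (List T)) ∧
    ∀ M : Language T, M ≤ L → Set.Infinite (M : Set (List T)) → ¬ M.IsContextFree

/-- L₂' = { w x y : |w| = |x|, 2|w| = |y|, w nonempty over {1,2}, x over {3,6},
y over {5,10,15,30} }. -/
def L2' : Language ℕ :=
  {s | ∃ w x y : List ℕ, w ≠ [] ∧ (∀ a ∈ w, a = 1 ∨ a = 2) ∧
    (∀ a ∈ x, a = 3 ∨ a = 6) ∧ (∀ a ∈ y, a = 5 ∨ a = 10 ∨ a = 15 ∨ a = 30) ∧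
    w.length = x.length ∧ 2 * w.length = y.length ∧ s = w ++ x ++ y}

namespace CFLApp

/-- Class of a symbol: 1 for {1,2}, 2 for {3,6}, 3 otherwise (incl. {5,10,15,30}). -/
def F : ℕ → ℕ := fun a => if a = 1 ∨ a = 2 then 1 else if a = 3 ∨ a = 6 then 2 else 3

lemma F_cases (a : ℕ) : F a = 1 ∨ F a = 2 ∨ F a = 3 := by
  unfold F; split_ifs <;> simp

/-- Number of symbols of class `j`. -/
def cnt (j : ℕ) (l : List ℕ) : ℕ := l.countP fun a => F a == j

lemma cnt_append (j : ℕ) (l₁ l₂ : List ℕ) : cnt j (l₁ ++ l₂) = cnt j l₁ + cnt j l₂ :=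
  List.countP_append

lemma cnt_flatten_replicate (j : ℕ) (v : List ℕ) (i : ℕ) :
    cnt j ((List.replicate i v).flatten) = i * cnt j v := by
  induction i with
  | zero => simp [cnt]
  | succ i ih =>
    rw [List.replicate_succ, List.flatten_cons, cnt_append, ih]
    ring

lemma sum_cnt (l : List ℕ) : cnt 1 l + cnt 2 l + cnt 3 l = l.length := by
  induction l with
  | nil => simp [cnt]
  | cons a l ih =>
    rcases F_cases a with h | h | h <;>
      simp only [cnt, List.countP_cons, h, List.length_cons] at * <;> simp <;> omega

lemma pairwise_const {l : List ℕ} {c : ℕ} (h : ∀ a ∈ l, F a = c) :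
    (l.map F).Pairwise (· ≤ ·) := by
  apply List.pairwise_of_forall_mem_list
  intro a ha b hb
  simp only [List.mem_map] at ha hb
  obtain ⟨a', ha', rfl⟩ := ha
  obtain ⟨b', hb', rfl⟩ := hb
  rw [h a' ha', h b' hb']

lemma mem_L2'_facts {s : List ℕ} (hs : s ∈ L2') :
    cnt 1 s = cnt 2 s ∧ cnt 3 s = 2 * cnt 1 s ∧ 1 ≤ cnt 1 s ∧
      (s.map F).Pairwise (· ≤ ·) ∧ ∀ a ∈ s, a < 31 := by
  obtain ⟨w, x, y, hwne, hw, hx, hy, hlen1, hlen2, rfl⟩ := hs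
  have hFw : ∀ a ∈ w, F a = 1 := fun a ha => by rcases hw a ha with rfl | rfl <;> simp [F]
  have hFx : ∀ a ∈ x, F a = 2 := fun a ha => by rcases hx a ha with rfl | rfl <;> simp [F]
  have hFy : ∀ a ∈ y, F a = 3 := fun a ha => by
    rcases hy a ha with rfl | rfl | rfl | rfl <;> simp [F]
  have c1w : cnt 1 w = w.length := List.countP_eq_length.mpr fun a ha => by simp [hFw a ha]
  have c2w : cnt 2 w = 0 := List.countP_eq_zero.mpr fun a ha => by simp [hFw a ha]
  have c3w : cnt 3 w = 0 := List.countP_eq_zero.mpr fun a ha => by simp [hFw a ha]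
  have c1x : cnt 1 x = 0 := List.countP_eq_zero.mpr fun a ha => by simp [hFx a ha]
  have c2x : cnt 2 x = x.length := List.countP_eq_length.mpr fun a ha => by simp [hFx a ha]
  have c3x : cnt 3 x = 0 := List.countP_eq_zero.mpr fun a ha => by simp [hFx a ha]
  have c1y : cnt 1 y = 0 := List.countP_eq_zero.mpr fun a ha => by simp [hFy a ha]
  have c2y : cnt 2 y = 0 := List.countP_eq_zero.mpr fun a ha => by simp [hFy a ha]
  have c3y : cnt 3 y = y.length := List.countP_eq_length.mpr fun a ha => by simp [hFy a ha]
  have hwpos : 0 < w.length := List.length_pos_iff.mpr hwne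
  refine ⟨?_, ?_, ?_, ?_, ?_⟩
  · simp only [cnt_append, c1w, c2w, c1x, c2x, c1y, c2y]; omega
  · simp only [cnt_append, c1w, c3w, c1x, c3x, c1y, c3y]; omega
  · simp only [cnt_append, c1w, c1x, c1y]; omega
  · rw [List.map_append, List.map_append]
    refine List.pairwise_append.mpr ⟨List.pairwise_append.mpr
      ⟨pairwise_const hFw, pairwise_const hFx, ?_⟩, pairwise_const hFy, ?_⟩
    · intro a ha b hb
      simp only [List.mem_map] at ha hb
      obtain ⟨a', ha', rfl⟩ := ha
      obtain ⟨b', hb', rfl⟩ := hb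
      rw [hFw a' ha', hFx b' hb']; omega
    · intro a ha b hb
      simp only [List.mem_append, List.mem_map] at ha hb
      obtain ⟨b', hb', rfl⟩ := hb
      rcases ha with ⟨a', ha', rfl⟩ | ⟨a', ha', rfl⟩
      · rw [hFw a' ha', hFy b' hb']; omega
      · rw [hFx a' ha', hFy b' hb']; omega
  · intro a ha
    simp only [List.mem_append] at ha
    rcases ha with (ha | ha) | ha
    · rcases hw a ha with rfl | rfl <;> omega
    · rcases hx a ha with rfl | rfl <;> omega
    · rcases hy a ha with rfl | rfl | rfl | rfl <;> omega

lemma const_of_infix {s v : List ℕ} (hinf : (v ++ v) <:+: s) (hs : s ∈ L2') :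
    ∀ a ∈ v, ∀ b ∈ v, F a = F b := by
  have hpw := (mem_L2'_facts hs).2.2.2.1
  have hsub : ((v ++ v).map F).Pairwise (· ≤ ·) :=
    List.Pairwise.sublist (List.Sublist.map F hinf.sublist) hpw
  rw [List.map_append, List.pairwise_append] at hsub
  obtain ⟨-, -, hcross⟩ := hsub
  intro a ha b hb
  exact le_antisymm (hcross _ (List.mem_map_of_mem (f := F) ha) _ (List.mem_map_of_mem (f := F) hb))
    (hcross _ (List.mem_map_of_mem (f := F) hb) _ (List.mem_map_of_mem (f := F) ha))

lemma exists_witness {j : ℕ} {v x : List ℕ} (h : 0 < cnt j v + cnt j x) :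
    (∃ a ∈ v, F a = j) ∨ (∃ a ∈ x, F a = j) := by
  rcases Nat.lt_or_ge 0 (cnt j v) with hv | hv
  · left
    have := List.countP_pos_iff.mp hv
    simpa using this
  · right
    have hx : 0 < cnt j x := by omega
    have := List.countP_pos_iff.mp hx
    simpa using this

end CFLApp

/-- L₂' is CFL-immune. -/
theorem L2'_CFLImmune : CFLImmune L2' := by
  constructor
  · refine Set.infinite_of_injective_forall_mem
      (f := fun n : ℕ => List.replicate (n + 1) 1 ++ List.replicate (n + 1) 3
        ++ List.replicate (2 * (n + 1)) 5) ?_ ?_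
    · intro a b hab
      have := congrArg List.length hab
      simp at this
      omega
    · intro n
      exact ⟨List.replicate (n + 1) 1, List.replicate (n + 1) 3, List.replicate (2 * (n + 1)) 5,
        by simp, fun a ha => Or.inl (List.eq_of_mem_replicate ha),
        fun a ha => Or.inl (List.eq_of_mem_replicate ha),
        fun a ha => Or.inl (List.eq_of_mem_replicate ha), by simp, by simp, rfl⟩
  · rintro M hML hMinf ⟨g, hg⟩
    classical
    set N := CFLPump.mOf g ^ ((CFLPump.inputsOf g).card + 1) with hN
    have hlong : ∃ w ∈ (M : Set (List ℕ)), N < w.length := by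
      by_contra hcon
      push_neg at hcon
      have hfin : Set.Finite (M : Set (List ℕ)) := by
        apply Set.Finite.subset ((List.finite_length_le (Fin 31) N).image
          (fun l : List (Fin 31) => l.map Fin.val))
        intro w hwM
        have hb := (CFLApp.mem_L2'_facts (hML hwM)).2.2.2.2
        refine ⟨w.map (fun a => (⟨a % 31, Nat.mod_lt _ (by norm_num)⟩ : Fin 31)), ?_, ?_⟩
        · simpa using hcon w hwM
        · dsimp only
          rw [List.map_map]
          have hid : ∀ a ∈ w, (Fin.val ∘
              (fun a : ℕ => (⟨a % 31, Nat.mod_lt _ (by norm_num)⟩ : Fin 31))) a = id a :=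
            fun a ha => by simp [Nat.mod_eq_of_lt (hb a ha)]
          rw [List.map_congr_left hid, List.map_id]
      exact (Set.not_infinite.mpr hfin) hMinf
    obtain ⟨w, hwM, hwlen⟩ := hlong
    have hwL : w ∈ g.language := by rw [hg]; exact hwM
    obtain ⟨u, v, z, x, y, hsplit, hvx, hpump⟩ := CFLPump.cfg_pump g hwL hwlen
    have hmem : ∀ i, (u ++ (List.replicate i v).flatten ++ z
        ++ (List.replicate i x).flatten ++ y) ∈ L2' := by
      intro i
      apply hML
      show _ ∈ (M : Set (List ℕ))
      rw [← hg]
      exact hpump i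
    have hexp : ∀ j i, CFLApp.cnt j (u ++ (List.replicate i v).flatten ++ z
        ++ (List.replicate i x).flatten ++ y) =
        CFLApp.cnt j u + i * CFLApp.cnt j v + CFLApp.cnt j z + i * CFLApp.cnt j x
          + CFLApp.cnt j y := by
      intro j i
      simp only [CFLApp.cnt_append, CFLApp.cnt_flatten_replicate]
    have h0 := CFLApp.mem_L2'_facts (hmem 0)
    have h1 := CFLApp.mem_L2'_facts (hmem 1)
    have e10 := h0.1
    have e30 := h0.2.1
    have e11 := h1.1
    have e31 := h1.2.1
    rw [hexp 1 0, hexp 2 0] at e10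
    rw [hexp 3 0, hexp 1 0] at e30
    rw [hexp 1 1, hexp 2 1] at e11
    rw [hexp 3 1, hexp 1 1] at e31
    have hsv := CFLApp.sum_cnt v
    have hsx := CFLApp.sum_cnt x
    have hlp : 0 < v.length + x.length := by
      have := List.length_pos_iff.mpr hvx
      simpa using this
    have hα1 : 0 < CFLApp.cnt 1 v + CFLApp.cnt 1 x := by omega
    have hα2 : 0 < CFLApp.cnt 2 v + CFLApp.cnt 2 x := by omega
    have hα3 : 0 < CFLApp.cnt 3 v + CFLApp.cnt 3 x := by omega
    have h2v : (List.replicate 2 v).flatten = v ++ v := by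
      simp [List.replicate_succ]
    have h2x : (List.replicate 2 x).flatten = x ++ x := by
      simp [List.replicate_succ]
    have hconstv : ∀ a ∈ v, ∀ b ∈ v, CFLApp.F a = CFLApp.F b := by
      refine CFLApp.const_of_infix ?_ (hmem 2)
      exact ⟨u, z ++ (List.replicate 2 x).flatten ++ y, by simp [h2v, List.append_assoc]⟩
    have hconstx : ∀ a ∈ x, ∀ b ∈ x, CFLApp.F a = CFLApp.F b := by
      refine CFLApp.const_of_infix ?_ (hmem 2)
      exact ⟨u ++ (List.replicate 2 v).flatten ++ z, y, by simp [h2x, List.append_assoc]⟩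
    rcases CFLApp.exists_witness hα1 with ⟨a1, ha1, hf1⟩ | ⟨a1, ha1, hf1⟩ <;>
      rcases CFLApp.exists_witness hα2 with ⟨a2, ha2, hf2⟩ | ⟨a2, ha2, hf2⟩ <;>
      rcases CFLApp.exists_witness hα3 with ⟨a3, ha3, hf3⟩ | ⟨a3, ha3, hf3⟩
    · have := hconstv a1 ha1 a2 ha2; omega
    · have := hconstv a1 ha1 a2 ha2; omega
    · have := hconstv a1 ha1 a3 ha3; omega
    · have := hconstx a2 ha2 a3 ha3; omega
    · have := hconstv a2 ha2 a3 ha3; omega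
    · have := hconstx a1 ha1 a3 ha3; omega
    · have := hconstx a1 ha1 a2 ha2; omega
    · have := hconstx a1 ha1 a2 ha2; omega
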